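/- Let γ > 0, let X ⊂ ℝ² be a domain partitioned into M unit-area regions with constant request rates λ_1 ≥ λ_2 ≥ … ≥ λ_M > 0, and suppose region i with k_i cache slots incurs cost λ_i·(ζ k̄^{−γ/2} + C_r(1 − k_i/k̄)) if k_i < k̄ and λ_i ζ k_i^{−γ/2} if k_i ≥ k̄, where k̄ = 1/(2 C_r^{2/γ}) and ζ = 2^{(2−γ)/2}/(γ+2). If an allocation (k_1,…,k_M) with Σ_i k_i = k has indices i < j with k_i < k̄ and k_j > 0, then the allocation obtained by transferring min(k̄ − k_i, k_j) slots from region j to region i has total cost no larger than the original allocation. -/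

import Mathlib

/-- Exchange argument for cache-slot allocation with finite `C_r`.
Region `l` with `x` slots costs `λ_l (ζ k̄^(-γ/2) + C_r (1 - x/k̄))` if `x < k̄` and
`λ_l ζ x^(-γ/2)` if `x ≥ k̄`, where `k̄ = 1/(2 C_r^(2/γ))` and `ζ = 2^((2-γ)/2)/(γ+2)`.
If rates are non-increasing (`λ_1 ≥ … ≥ λ_M`) and an allocation has `i < j` with
`K_i < k̄` and `K_j > 0`, then transferring `min(k̄ - K_i, K_j)` slots from `j` to `i`
does not increase the total cost. -/
theorem stmt16 (γ Cr : ℝ) (hγ : 0 < γ) (hCr : 0 < Cr)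
    (M : ℕ) (lam : Fin M → ℝ) (hlam : ∀ i, 0 < lam i) (hmono : Antitone lam)
    (kbar ζ : ℝ) (hkbar : kbar = 1 / (2 * Cr ^ (2 / γ)))
    (hζ : ζ = 2 ^ ((2 - γ) / 2) / (γ + 2))
    (c : ℝ → ℝ → ℝ)
    (hc : ∀ l x, c l x =
      if x < kbar then l * (ζ * kbar ^ (-(γ / 2)) + Cr * (1 - x / kbar))
      else l * ζ * x ^ (-(γ / 2)))
    (K : Fin M → ℝ) (hKpos : ∀ i, 0 ≤ K i)
    (kk : ℝ) (hsum : ∑ i, K i = kk)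
    (i j : Fin M) (hij : i < j) (hi : K i < kbar) (hj : 0 < K j)
    (δ : ℝ) (hδ : δ = min (kbar - K i) (K j))
    (K' : Fin M → ℝ)
    (hK' : K' = Function.update (Function.update K i (K i + δ)) j (K j - δ)) :
    ∑ l, c (lam l) (K' l) ≤ ∑ l, c (lam l) (K l) := by
  have hkb0 : 0 < kbar := by rw [hkbar]; positivity
  have hζ0 : 0 ≤ ζ := by rw [hζ]; positivity
  set f : ℝ → ℝ := fun x =>
    if x < kbar then ζ * kbar ^ (-(γ / 2)) + Cr * (1 - x / kbar)
    else ζ * x ^ (-(γ / 2)) with hf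
  have hcf : ∀ l x, c l x = l * f x := by
    intro l x
    rw [hc, hf]
    by_cases h : x < kbar <;> simp [h, mul_assoc]
  -- value of kbar ^ (-(γ/2))
  have hX : (0:ℝ) < 2 * Cr ^ (2 / γ) := by positivity
  have hkpow : kbar ^ (-(γ / 2)) = 2 ^ (γ / 2) * Cr := by
    rw [hkbar, one_div, Real.inv_rpow hX.le, Real.rpow_neg hX.le, inv_inv,
      Real.mul_rpow (by norm_num) (Real.rpow_nonneg hCr.le _),
      ← Real.rpow_mul hCr.le]
    have h1 : 2 / γ * (γ / 2) = 1 := by field_simp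
    rw [h1, Real.rpow_one]
  -- slope bound
  have hslope : ζ * (γ / 2) * kbar ^ (-(γ / 2)) ≤ Cr := by
    rw [hkpow, hζ]
    have h2 : (2:ℝ) ^ ((2 - γ) / 2) * 2 ^ (γ / 2) = 2 := by
      rw [← Real.rpow_add two_pos]
      have he : (2 - γ) / 2 + γ / 2 = 1 := by ring
      rw [he, Real.rpow_one]
    have ha : (0:ℝ) < 2 ^ ((2 - γ) / 2) := by positivity
    have hb : (0:ℝ) < 2 ^ (γ / 2) := by positivity
    have hγ2 : (0:ℝ) < γ + 2 := by linarith
    rw [div_mul_eq_mul_div, div_mul_eq_mul_div, div_le_iff₀ hγ2]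
    have key : 2 ^ ((2 - γ) / 2) * (γ / 2) * (2 ^ (γ / 2) * Cr) = γ * Cr := by
      linear_combination (γ / 2) * Cr * h2
    nlinarith [hCr.le]
  -- monotonicity of g x = ζ x^{-γ/2} + (Cr/kbar) x on [kbar, ∞)
  set g : ℝ → ℝ := fun x => ζ * x ^ (-(γ / 2)) + Cr / kbar * x with hgdef
  have hder : ∀ x, kbar < x →
      HasDerivAt g (ζ * (-(γ / 2) * x ^ (-(γ / 2) - 1)) + Cr / kbar) x := by
    intro x hx
    have h1 : HasDerivAt (fun y : ℝ => y ^ (-(γ / 2)))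
        (-(γ / 2) * x ^ (-(γ / 2) - 1)) x :=
      Real.hasDerivAt_rpow_const (Or.inl (hkb0.trans hx).ne')
    have h2 := (h1.const_mul ζ).add ((hasDerivAt_id x).const_mul (Cr / kbar))
    simpa [hgdef, mul_one, Pi.add_def] using h2
  have hg : MonotoneOn g (Set.Ici kbar) := by
    apply monotoneOn_of_deriv_nonneg (convex_Ici kbar)
    · apply ContinuousOn.add
      · apply ContinuousOn.mul continuousOn_const
        apply ContinuousOn.rpow_const continuousOn_id
        intro x hx
        exact Or.inl (hkb0.trans_le hx).ne'
      · exact continuousOn_const.mul continuousOn_id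
    · intro x hx
      rw [interior_Ici] at hx
      exact ((hder x hx).differentiableAt).differentiableWithinAt
    · intro x hx
      rw [interior_Ici] at hx
      rw [(hder x hx).deriv]
      have hb1 : x ^ (-(γ / 2) - 1) ≤ kbar ^ (-(γ / 2) - 1) :=
        Real.rpow_le_rpow_of_nonpos hkb0 hx.le (by linarith)
      have hb2 : kbar ^ (-(γ / 2) - 1) = kbar ^ (-(γ / 2)) / kbar := by
        rw [show -(γ / 2) - 1 = -(γ / 2) - 1 from rfl, Real.rpow_sub hkb0,
          Real.rpow_one]
      have hb3 : ζ * (γ / 2) * x ^ (-(γ / 2) - 1) ≤ Cr / kbar := by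
        calc ζ * (γ / 2) * x ^ (-(γ / 2) - 1)
            ≤ ζ * (γ / 2) * kbar ^ (-(γ / 2) - 1) := by
              apply mul_le_mul_of_nonneg_left hb1
              positivity
          _ = ζ * (γ / 2) * kbar ^ (-(γ / 2)) / kbar := by rw [hb2]; ring
          _ ≤ Cr / kbar := by gcongr
      nlinarith [hb3]
  -- Lipschitz-type bound
  have key : ∀ x y, kbar ≤ x → x ≤ y →
      ζ * x ^ (-(γ / 2)) - ζ * y ^ (-(γ / 2)) ≤ Cr / kbar * (y - x) := by
    intro x y hx hxy
    have := hg (Set.mem_Ici.2 hx) (Set.mem_Ici.2 (hx.trans hxy)) hxy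
    simp only [hgdef] at this
    nlinarith [this]
  have hLip : ∀ a b, 0 ≤ a → a ≤ b → f a - f b ≤ Cr / kbar * (b - a) := by
    intro a b ha hab
    by_cases hb : b < kbar
    · have haf : a < kbar := lt_of_le_of_lt hab hb
      simp only [hf, if_pos haf, if_pos hb]
      rw [div_mul_eq_mul_div, le_div_iff₀ hkb0]
      field_simp
      ring_nf
      nlinarith [hkb0]
    · push_neg at hb
      by_cases ha' : a < kbar
      · have h1 := key kbar b le_rfl hb
        simp only [hf, if_pos ha', if_neg (not_lt.2 hb)]
        have h2 : Cr * (1 - a / kbar) = Cr / kbar * (kbar - a) := by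
          field_simp
        nlinarith [h1, h2]
      · push_neg at ha'
        have h1 := key a b ha' hab
        simp only [hf, if_neg (not_lt.2 ha'), if_neg (not_lt.2 hb)]
        linarith [h1]
  -- δ facts
  have hδ1 : δ ≤ kbar - K i := by rw [hδ]; exact min_le_left _ _
  have hδ2 : δ ≤ K j := by rw [hδ]; exact min_le_right _ _
  have hδ0 : 0 ≤ δ := by rw [hδ]; exact le_min (by linarith) hj.le
  -- exact gain at i
  have hgain : f (K i) - f (K i + δ) = Cr / kbar * δ := by
    by_cases h : K i + δ < kbar
    · simp only [hf, if_pos hi, if_pos h]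
      field_simp
      ring
    · have he : K i + δ = kbar := le_antisymm (by linarith) (not_lt.1 h)
      simp only [hf, if_pos hi, if_neg h]
      rw [he]
      have hd : δ = kbar - K i := by linarith
      rw [hd]
      field_simp
      ring
  -- loss at j
  have hloss : f (K j - δ) - f (K j) ≤ Cr / kbar * δ := by
    have := hLip (K j - δ) (K j) (by linarith) (by linarith)
    simpa using this
  -- the pairwise inequality
  have hne : i ≠ j := ne_of_lt hij
  have hpair : lam i * f (K i + δ) + lam j * f (K j - δ) ≤
      lam i * f (K i) + lam j * f (K j) := by
    have hlm : lam j ≤ lam i := hmono hij.le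
    have e1 : lam j * (f (K j - δ) - f (K j)) ≤ lam j * (Cr / kbar * δ) :=
      mul_le_mul_of_nonneg_left hloss (hlam j).le
    have e2 : lam j * (Cr / kbar * δ) ≤ lam i * (Cr / kbar * δ) :=
      mul_le_mul_of_nonneg_right hlm (by positivity)
    have e3 : lam i * (f (K i) - f (K i + δ)) = lam i * (Cr / kbar * δ) := by
      rw [hgain]
    linarith [e1, e2, e3]
  -- sum decomposition
  have hupd : ∀ (s : Finset (Fin M)) (F : Fin M → ℝ) (a : Fin M), a ∈ s → ∀ v : ℝ,
      ∑ l ∈ s, c (lam l) (Function.update F a v l) =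
        c (lam a) v + ∑ l ∈ s.erase a, c (lam l) (F l) := by
    intro s F a ha v
    rw [← Finset.add_sum_erase s _ ha, Function.update_self]
    congr 1
    apply Finset.sum_congr rfl
    intro x hx
    rw [Function.update_of_ne (Finset.ne_of_mem_erase hx)]
  have hi_mem : i ∈ Finset.univ.erase j :=
    Finset.mem_erase.2 ⟨hne, Finset.mem_univ i⟩
  have hL : ∑ l, c (lam l) (K' l) = c (lam j) (K j - δ) + (c (lam i) (K i + δ) +
      ∑ l ∈ (Finset.univ.erase j).erase i, c (lam l) (K l)) := by
    rw [hK', hupd Finset.univ _ j (Finset.mem_univ j), hupd _ K i hi_mem]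
  have hR : ∑ l, c (lam l) (K l) = c (lam j) (K j) + (c (lam i) (K i) +
      ∑ l ∈ (Finset.univ.erase j).erase i, c (lam l) (K l)) := by
    rw [← Finset.add_sum_erase Finset.univ _ (Finset.mem_univ j),
      ← Finset.add_sum_erase _ _ hi_mem]
  rw [hL, hR, hcf, hcf, hcf, hcf]
  linarith [hpair]
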